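/- Over the field Z/2, consider the free DGA generated by elements b, a, y, x, z with gradings |b| = 1+m, |a| = |y| = m, |x| = |z| = m-1 for a fixed integer m ≠ 1, and differential ∂b = 0, ∂y = 0, ∂x = 0, ∂a = z + x, ∂z = 0; and a second DGA on generators b, a, y, x, z' with |z'| = 1-m and ∂'a = x, ∂'z' = 0 (all else zero). Then: (i) every augmentation ε of either DGA vanishes on z (resp. z'); (ii) augmentations of the two DGAs are in canonical bijection via the identity on the shared generators; and (iii) for corresponding augmentations, the linearized homology in degree 1-m of the second DGA equals that of the first plus one extra dimension spanned by z': LCH_{1-m}(A', ∂', ε) ≅ LCH_{1-m}(A, ∂, ε) ⊕ Z/2⟨z'⟩. In particular the linearized homologies differ, for every pair of corresponding augmentations. -/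

import Mathlib

/-- The five generators `b, a, y, x, z` (with `z` reinterpreted as `z'` in the second
DGA). -/
inductive Gen : Type
  | b | a | y | x | z
  deriving DecidableEq

/-- A generator as an element of the free DGA `MonoidAlgebra (ZMod 2) (FreeMonoid Gen)`. -/
noncomputable def og (g : Gen) : MonoidAlgebra (ZMod 2) (FreeMonoid Gen) :=
  MonoidAlgebra.single (FreeMonoid.of g) 1

/-- The gradings of the first DGA: `|b| = 1+m`, `|a| = |y| = m`, `|x| = |z| = m-1`. -/
def grm (m : ℤ) : Gen → ℤ
  | .b => 1 + m
  | .a => m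
  | .y => m
  | .x => m - 1
  | .z => m - 1

/-- The gradings of the second DGA, where `z` is replaced by `z'` with `|z'| = 1-m`. -/
def grm' (m : ℤ) : Gen → ℤ
  | .b => 1 + m
  | .a => m
  | .y => m
  | .x => m - 1
  | .z => 1 - m

/-- Augmentations: unital algebra maps to `ℤ/2` vanishing on generators of nonzero degree
and annihilating the image of the differential. -/
def AugSet (gr : Gen → ℤ)
    (dif : MonoidAlgebra (ZMod 2) (FreeMonoid Gen) →ₗ[ZMod 2]
      MonoidAlgebra (ZMod 2) (FreeMonoid Gen)) :
    Set (MonoidAlgebra (ZMod 2) (FreeMonoid Gen) →ₐ[ZMod 2] ZMod 2) :=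
  {ε | (∀ a, ε (dif a) = 0) ∧ ∀ g : Gen, gr g ≠ 0 → ε (og g) = 0}

/-- The span of the generators of degree `k` in the linearized complex
`V = span of generators`. -/
noncomputable def Vdeg (gr : Gen → ℤ) (k : ℤ) : Submodule (ZMod 2) (Gen →₀ ZMod 2) :=
  Submodule.span (ZMod 2) {v | ∃ g : Gen, gr g = k ∧ v = Finsupp.single g (1 : ZMod 2)}

/-- Degree-`k` cycles of the linearized differential `D`. -/
noncomputable def Zk (D : (Gen →₀ ZMod 2) →ₗ[ZMod 2] (Gen →₀ ZMod 2)) (gr : Gen → ℤ)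
    (k : ℤ) : Submodule (ZMod 2) (Gen →₀ ZMod 2) :=
  LinearMap.ker D ⊓ Vdeg gr k

/-- Degree-`k` boundaries (inside the cycles) of the linearized differential `D`. -/
noncomputable def Bk (D : (Gen →₀ ZMod 2) →ₗ[ZMod 2] (Gen →₀ ZMod 2)) (gr : Gen → ℤ)
    (k : ℤ) : Submodule (ZMod 2) (Gen →₀ ZMod 2) :=
  Submodule.map D (Vdeg gr (k + 1)) ⊓ Zk D gr k

/-- Subquotient `Z / (B ∩ Z)`-style homology of a pair of submodules. -/
def SubQuot {K M : Type} [CommRing K] [AddCommGroup M] [Module K M]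
    (Z B : Submodule K M) : Type :=
  Z ⧸ (Submodule.comap Z.subtype B)

noncomputable instance {K M : Type} [CommRing K] [AddCommGroup M] [Module K M]
    (Z B : Submodule K M) : AddCommGroup (SubQuot Z B) :=
  inferInstanceAs (AddCommGroup (Z ⧸ (Submodule.comap Z.subtype B)))

noncomputable instance {K M : Type} [CommRing K] [AddCommGroup M] [Module K M]
    (Z B : Submodule K M) : Module K (SubQuot Z B) :=
  inferInstanceAs (Module K (Z ⧸ (Submodule.comap Z.subtype B)))

/-- Linearized contact homology in degree `k` of a linearized differential `D` on the
span of the generators: degree-`k` cycles modulo boundaries of degree-`(k+1)` elements. -/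
def LCHdeg (D : (Gen →₀ ZMod 2) →ₗ[ZMod 2] (Gen →₀ ZMod 2)) (gr : Gen → ℤ) (k : ℤ) :
    Type :=
  SubQuot (Zk D gr k) (Bk D gr k)

noncomputable instance (D : (Gen →₀ ZMod 2) →ₗ[ZMod 2] (Gen →₀ ZMod 2))
    (gr : Gen → ℤ) (k : ℤ) : AddCommGroup (LCHdeg D gr k) :=
  inferInstanceAs (AddCommGroup (SubQuot (Zk D gr k) (Bk D gr k)))

noncomputable instance (D : (Gen →₀ ZMod 2) →ₗ[ZMod 2] (Gen →₀ ZMod 2))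
    (gr : Gen → ℤ) (k : ℤ) : Module (ZMod 2) (LCHdeg D gr k) :=
  inferInstanceAs (Module (ZMod 2) (SubQuot (Zk D gr k) (Bk D gr k)))


instance : Fintype Gen :=
  ⟨{.b, .a, .y, .x, .z}, fun g => by cases g <;> decide⟩

lemma dif_one
    (dif : MonoidAlgebra (ZMod 2) (FreeMonoid Gen) →ₗ[ZMod 2]
      MonoidAlgebra (ZMod 2) (FreeMonoid Gen))
    (hL : ∀ u v, dif (u * v) = dif u * v + u * dif v) : dif 1 = 0 := by
  have h := hL 1 1
  simp only [mul_one, one_mul] at h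
  exact (left_eq_add.mp h)

lemma key_eq
    (dif dif' : MonoidAlgebra (ZMod 2) (FreeMonoid Gen) →ₗ[ZMod 2]
      MonoidAlgebra (ZMod 2) (FreeMonoid Gen))
    (hL : ∀ u v, dif (u * v) = dif u * v + u * dif v)
    (hL' : ∀ u v, dif' (u * v) = dif' u * v + u * dif' v)
    (hb : dif (og .b) = 0) (hy : dif (og .y) = 0) (hx : dif (og .x) = 0)
    (ha : dif (og .a) = og .z + og .x) (hz : dif (og .z) = 0)
    (hb' : dif' (og .b) = 0) (hy' : dif' (og .y) = 0) (hx' : dif' (og .x) = 0)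
    (ha' : dif' (og .a) = og .x) (hz' : dif' (og .z) = 0)
    (ε : MonoidAlgebra (ZMod 2) (FreeMonoid Gen) →ₐ[ZMod 2] ZMod 2)
    (hεz : ε (og .z) = 0) :
    ∀ u, ε (dif u) = ε (dif' u) := by
  have hgen : ∀ g, ε (dif (og g)) = ε (dif' (og g)) := by
    intro g
    cases g <;> simp [hb, hy, hx, hz, ha, hb', hy', hx', ha', hz', map_add, hεz]
  have hw : ∀ w : FreeMonoid Gen,
      ε (dif (MonoidAlgebra.single w 1)) = ε (dif' (MonoidAlgebra.single w 1)) := by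
    intro w
    induction w using FreeMonoid.recOn with
    | one =>
      have h1 : (MonoidAlgebra.single (1 : FreeMonoid Gen) (1 : ZMod 2)) = 1 := rfl
      rw [h1, dif_one dif hL, dif_one dif' hL']
    | of_mul g xs ih =>
      have hsplit : MonoidAlgebra.single (FreeMonoid.of g * xs) (1 : ZMod 2)
          = og g * MonoidAlgebra.single xs 1 := by
        rw [og, MonoidAlgebra.single_mul_single, one_mul]
      rw [hsplit, hL, hL', map_add, map_add, map_mul, map_mul, map_mul, map_mul,
        hgen g, ih]
  intro u
  induction u using MonoidAlgebra.induction_linear with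
  | zero => simp
  | add f g hf hg => rw [map_add, map_add, map_add, map_add, hf, hg]
  | single w c =>
    have hc : (MonoidAlgebra.single w c) = c • MonoidAlgebra.single w (1 : ZMod 2) := by
      rw [MonoidAlgebra.smul_single', mul_one]
    rw [hc, map_smul, map_smul, map_smul, map_smul, hw]

lemma augset_eq (m : ℤ) (hm : m ≠ 1)
    (dif dif' : MonoidAlgebra (ZMod 2) (FreeMonoid Gen) →ₗ[ZMod 2]
      MonoidAlgebra (ZMod 2) (FreeMonoid Gen))
    (hL : ∀ u v, dif (u * v) = dif u * v + u * dif v)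
    (hL' : ∀ u v, dif' (u * v) = dif' u * v + u * dif' v)
    (hb : dif (og .b) = 0) (hy : dif (og .y) = 0) (hx : dif (og .x) = 0)
    (ha : dif (og .a) = og .z + og .x) (hz : dif (og .z) = 0)
    (hb' : dif' (og .b) = 0) (hy' : dif' (og .y) = 0) (hx' : dif' (og .x) = 0)
    (ha' : dif' (og .a) = og .x) (hz' : dif' (og .z) = 0) :
    AugSet (grm m) dif = AugSet (grm' m) dif' := by
  have hdeg : ∀ g, grm m g ≠ 0 ↔ grm' m g ≠ 0 := by
    intro g; cases g <;> simp only [grm, grm'] <;> omega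
  ext ε
  constructor
  · rintro ⟨h1, h2⟩
    have hεz : ε (og .z) = 0 := h2 .z (by simp only [grm]; omega)
    refine ⟨fun u => ?_, fun g hg => h2 g ((hdeg g).mpr hg)⟩
    rw [← key_eq dif dif' hL hL' hb hy hx ha hz hb' hy' hx' ha' hz' ε hεz u]
    exact h1 u
  · rintro ⟨h1, h2⟩
    have hεz : ε (og .z) = 0 := h2 .z (by simp only [grm']; omega)
    refine ⟨fun u => ?_, fun g hg => h2 g ((hdeg g).mp hg)⟩
    rw [key_eq dif dif' hL hL' hb hy hx ha hz hb' hy' hx' ha' hz' ε hεz u]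
    exact h1 u

-- equiv LCHdeg ≃ Zk when Bk = ⊥
noncomputable def lchEquiv (D : (Gen →₀ ZMod 2) →ₗ[ZMod 2] (Gen →₀ ZMod 2))
    (gr : Gen → ℤ) (k : ℤ) (hB : Bk D gr k = ⊥) :
    LCHdeg D gr k ≃ₗ[ZMod 2] ↥(Zk D gr k) :=
  Submodule.quotEquivOfEqBot _
    (by rw [hB, Submodule.comap_bot, Submodule.ker_subtype])


lemma part3 (m : ℤ) (hm : m ≠ 1)
    (D D' : (Gen →₀ ZMod 2) →ₗ[ZMod 2] (Gen →₀ ZMod 2))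
    (hDb : D (Finsupp.single Gen.b 1) = 0)
    (hD'b : D' (Finsupp.single Gen.b 1) = 0)
    (hD'z : D' (Finsupp.single Gen.z 1) = 0) :
    ∃ _ : LCHdeg D' (grm' m) (1 - m) ≃ₗ[ZMod 2]
        (LCHdeg D (grm m) (1 - m)) × (ZMod 2),
      Module.finrank (ZMod 2) (LCHdeg D' (grm' m) (1 - m))
        = Module.finrank (ZMod 2) (LCHdeg D (grm m) (1 - m)) + 1 := by
  have hV2 : Vdeg (grm m) (1 - m + 1) = ⊥ := by
    have hset : {v | ∃ g : Gen, grm m g = 1 - m + 1 ∧ v = Finsupp.single g (1 : ZMod 2)}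
        = (∅ : Set (Gen →₀ ZMod 2)) := by
      ext v
      simp only [Set.mem_setOf_eq, Set.mem_empty_iff_false, iff_false, not_exists]
      rintro g ⟨hg, rfl⟩
      cases g <;> simp only [grm] at hg <;> omega
    rw [Vdeg, hset, Submodule.span_empty]
  have hV2' : Vdeg (grm' m) (1 - m + 1) = ⊥ := by
    have hset : {v | ∃ g : Gen, grm' m g = 1 - m + 1 ∧ v = Finsupp.single g (1 : ZMod 2)}
        = (∅ : Set (Gen →₀ ZMod 2)) := by
      ext v
      simp only [Set.mem_setOf_eq, Set.mem_empty_iff_false, iff_false, not_exists]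
      rintro g ⟨hg, rfl⟩
      cases g <;> simp only [grm'] at hg <;> omega
    rw [Vdeg, hset, Submodule.span_empty]
  have hB : Bk D (grm m) (1 - m) = ⊥ := by
    rw [Bk, hV2, Submodule.map_bot, bot_inf_eq]
  have hB' : Bk D' (grm' m) (1 - m) = ⊥ := by
    rw [Bk, hV2', Submodule.map_bot, bot_inf_eq]
  have hZ : Zk D (grm m) (1 - m) = Vdeg (grm m) (1 - m) := by
    rw [Zk, inf_eq_right, Vdeg]
    apply Submodule.span_le.mpr
    rintro v ⟨g, hg, rfl⟩
    simp only [SetLike.mem_coe, LinearMap.mem_ker]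
    cases g <;> simp only [grm] at hg
    · exact hDb
    · omega
    · omega
    · omega
    · omega
  have hZ' : Zk D' (grm' m) (1 - m) = Vdeg (grm' m) (1 - m) := by
    rw [Zk, inf_eq_right, Vdeg]
    apply Submodule.span_le.mpr
    rintro v ⟨g, hg, rfl⟩
    simp only [SetLike.mem_coe, LinearMap.mem_ker]
    cases g <;> simp only [grm'] at hg
    · exact hD'b
    · omega
    · omega
    · omega
    · exact hD'z
  have e1 : LCHdeg D (grm m) (1 - m) ≃ₗ[ZMod 2] ↥(Vdeg (grm m) (1 - m)) :=
    (lchEquiv D (grm m) (1 - m) hB).trans (LinearEquiv.ofEq _ _ hZ)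
  have e1' : LCHdeg D' (grm' m) (1 - m) ≃ₗ[ZMod 2] ↥(Vdeg (grm' m) (1 - m)) :=
    (lchEquiv D' (grm' m) (1 - m) hB').trans (LinearEquiv.ofEq _ _ hZ')
  haveI : FiniteDimensional (ZMod 2) (LCHdeg D (grm m) (1 - m)) :=
    e1.symm.finiteDimensional
  haveI : FiniteDimensional (ZMod 2) (LCHdeg D' (grm' m) (1 - m)) :=
    e1'.symm.finiteDimensional
  have hzne : (Finsupp.single Gen.z (1 : ZMod 2)) ≠ 0 := by
    intro h
    have := DFunLike.congr_fun h Gen.z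
    simp at this
  have hbne : (Finsupp.single Gen.b (1 : ZMod 2)) ≠ 0 := by
    intro h
    have := DFunLike.congr_fun h Gen.b
    simp at this
  rcases eq_or_ne m 0 with hm0 | hm0
  · subst hm0
    have hVD : Vdeg (grm 0) (1 - 0)
        = Submodule.span (ZMod 2) {Finsupp.single Gen.b (1 : ZMod 2)} := by
      rw [Vdeg]
      congr 1
      ext v
      simp only [Set.mem_setOf_eq, Set.mem_singleton_iff]
      constructor
      · rintro ⟨g, hg, rfl⟩
        cases g <;> simp only [grm] at hg <;> first | rfl | omega
      · rintro rfl
        exact ⟨.b, by simp [grm], rfl⟩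
    have hVD' : Vdeg (grm' 0) (1 - 0) = Submodule.span (ZMod 2)
        {Finsupp.single Gen.b (1 : ZMod 2), Finsupp.single Gen.z (1 : ZMod 2)} := by
      rw [Vdeg]
      congr 1
      ext v
      simp only [Set.mem_setOf_eq, Set.mem_insert_iff, Set.mem_singleton_iff]
      constructor
      · rintro ⟨g, hg, rfl⟩
        cases g <;> simp only [grm'] at hg
        · exact Or.inl rfl
        · omega
        · omega
        · omega
        · exact Or.inr rfl
      · rintro (rfl | rfl)
        · exact ⟨.b, by simp [grm'], rfl⟩
        · exact ⟨.z, by simp [grm'], rfl⟩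
    have hr : Module.finrank (ZMod 2) ↥(Vdeg (grm 0) (1 - 0)) = 1 := by
      rw [hVD]
      exact finrank_span_singleton hbne
    have hli : LinearIndependent (ZMod 2)
        (Subtype.val : ({Finsupp.single Gen.b (1 : ZMod 2),
          Finsupp.single Gen.z (1 : ZMod 2)} : Set (Gen →₀ ZMod 2)) → (Gen →₀ ZMod 2)) := by
      have h1 := (Finsupp.basisSingleOne (R := ZMod 2) (ι := Gen)).linearIndependent
      have h2 := (linearIndepOn_id_range_iff h1.injective).mpr h1
      have h3 : LinearIndepOn (ZMod 2) id ({Finsupp.single Gen.b (1 : ZMod 2),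
            Finsupp.single Gen.z (1 : ZMod 2)} : Set (Gen →₀ ZMod 2)) := by
        refine LinearIndepOn.mono h2 ?_
        rintro v (rfl | rfl)
        · exact ⟨Gen.b, by simp [Finsupp.coe_basisSingleOne]⟩
        · exact ⟨Gen.z, by simp [Finsupp.coe_basisSingleOne]⟩
      exact h3
    have hbz : Finsupp.single Gen.b (1 : ZMod 2) ≠ Finsupp.single Gen.z (1 : ZMod 2) := by
      intro h
      have := DFunLike.congr_fun h Gen.b
      simp [Finsupp.single_apply] at this
    have hr' : Module.finrank (ZMod 2) ↥(Vdeg (grm' 0) (1 - 0)) = 2 := by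
      rw [hVD', finrank_span_set_eq_card hli]
      simp [Set.toFinset_insert, Set.toFinset_singleton, Finset.card_insert_of_notMem,
        hbz]
    refine ⟨LinearEquiv.ofFinrankEq _ _ ?_, ?_⟩
    · rw [Module.finrank_prod, Module.finrank_self, e1.finrank_eq, e1'.finrank_eq, hr, hr']
    · rw [e1.finrank_eq, e1'.finrank_eq, hr, hr']
  · have hVD : Vdeg (grm m) (1 - m) = ⊥ := by
      have hset : {v | ∃ g : Gen, grm m g = 1 - m ∧ v = Finsupp.single g (1 : ZMod 2)}
          = (∅ : Set (Gen →₀ ZMod 2)) := by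
        ext v
        simp only [Set.mem_setOf_eq, Set.mem_empty_iff_false, iff_false, not_exists]
        rintro g ⟨hg, rfl⟩
        cases g <;> simp only [grm] at hg <;> omega
      rw [Vdeg, hset, Submodule.span_empty]
    have hVD' : Vdeg (grm' m) (1 - m)
        = Submodule.span (ZMod 2) {Finsupp.single Gen.z (1 : ZMod 2)} := by
      rw [Vdeg]
      congr 1
      ext v
      simp only [Set.mem_setOf_eq, Set.mem_singleton_iff]
      constructor
      · rintro ⟨g, hg, rfl⟩
        cases g <;> simp only [grm'] at hg <;> first | rfl | omega
      · rintro rfl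
        exact ⟨.z, rfl, rfl⟩
    have hr : Module.finrank (ZMod 2) ↥(Vdeg (grm m) (1 - m)) = 0 := by
      rw [hVD]
      exact finrank_bot _ _
    have hr' : Module.finrank (ZMod 2) ↥(Vdeg (grm' m) (1 - m)) = 1 := by
      rw [hVD']
      exact finrank_span_singleton hzne
    refine ⟨LinearEquiv.ofFinrankEq _ _ ?_, ?_⟩
    · rw [Module.finrank_prod, Module.finrank_self, e1.finrank_eq, e1'.finrank_eq, hr, hr']
    · rw [e1.finrank_eq, e1'.finrank_eq, hr, hr']

/-- Over `ℤ/2`, the two free DGAs on `b, a, y, x, z` (resp. `z'`) with the indicated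
gradings (`m ≠ 1`) and differentials `∂a = z + x` (resp. `∂'a = x`), all other generators
closed, satisfy: (i) every augmentation vanishes on `z` (resp. `z'`); (ii) augmentations
of the two DGAs are in canonical bijection via the identity on the shared generators;
(iii) for corresponding augmentations, the linearized homology in degree `1-m` of the
second DGA is that of the first plus one extra `ℤ/2`, so the linearized homologies
differ. -/
theorem stmt_19 (m : ℤ) (hm : m ≠ 1)
    (dif dif' : MonoidAlgebra (ZMod 2) (FreeMonoid Gen) →ₗ[ZMod 2]
      MonoidAlgebra (ZMod 2) (FreeMonoid Gen))
    (hL : ∀ u v, dif (u * v) = dif u * v + u * dif v)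
    (hL' : ∀ u v, dif' (u * v) = dif' u * v + u * dif' v)
    (hd2 : ∀ u, dif (dif u) = 0) (hd2' : ∀ u, dif' (dif' u) = 0)
    (hb : dif (og .b) = 0) (hy : dif (og .y) = 0) (hx : dif (og .x) = 0)
    (ha : dif (og .a) = og .z + og .x) (hz : dif (og .z) = 0)
    (hb' : dif' (og .b) = 0) (hy' : dif' (og .y) = 0) (hx' : dif' (og .x) = 0)
    (ha' : dif' (og .a) = og .x) (hz' : dif' (og .z) = 0) :
    -- (i) every augmentation vanishes on `z` (resp. `z'`)
    ((∀ ε ∈ AugSet (grm m) dif, ε (og .z) = 0) ∧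
      (∀ ε' ∈ AugSet (grm' m) dif', ε' (og .z) = 0)) ∧
    -- (ii) canonical bijection of augmentations, the identity on shared generators
    (∃ e : (AugSet (grm m) dif) ≃ (AugSet (grm' m) dif'),
      ∀ (ε : AugSet (grm m) dif) (g : Gen), (e ε).1 (og g) = ε.1 (og g)) ∧
    -- (iii) the linearized homologies in degree `1-m` differ by one dimension
    (∀ ε ε' : MonoidAlgebra (ZMod 2) (FreeMonoid Gen) →ₐ[ZMod 2] ZMod 2,
      ε ∈ AugSet (grm m) dif → ε' ∈ AugSet (grm' m) dif' →
      (∀ g : Gen, ε (og g) = ε' (og g)) →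
      ∀ σ σ' : MonoidAlgebra (ZMod 2) (FreeMonoid Gen) →ₐ[ZMod 2]
        MonoidAlgebra (ZMod 2) (FreeMonoid Gen),
      (∀ g : Gen, σ (og g) = og g +
        algebraMap (ZMod 2) (MonoidAlgebra (ZMod 2) (FreeMonoid Gen)) (ε (og g))) →
      (∀ g : Gen, σ' (og g) = og g +
        algebraMap (ZMod 2) (MonoidAlgebra (ZMod 2) (FreeMonoid Gen)) (ε' (og g))) →
      ∀ D D' : (Gen →₀ ZMod 2) →ₗ[ZMod 2] (Gen →₀ ZMod 2),
      (∀ g g' : Gen, D (Finsupp.single g 1) g' =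
        ((σ (dif (σ (og g)))).coeff : FreeMonoid Gen →₀ ZMod 2) (FreeMonoid.of g')) →
      (∀ g g' : Gen, D' (Finsupp.single g 1) g' =
        ((σ' (dif' (σ' (og g)))).coeff : FreeMonoid Gen →₀ ZMod 2) (FreeMonoid.of g')) →
      ∃ _ : LCHdeg D' (grm' m) (1 - m) ≃ₗ[ZMod 2]
          (LCHdeg D (grm m) (1 - m)) × (ZMod 2),
        Module.finrank (ZMod 2) (LCHdeg D' (grm' m) (1 - m))
          = Module.finrank (ZMod 2) (LCHdeg D (grm m) (1 - m)) + 1) := by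

  obtain ⟨hεz1, hεz2⟩ : ((∀ ε ∈ AugSet (grm m) dif, ε (og .z) = 0) ∧
      (∀ ε' ∈ AugSet (grm' m) dif', ε' (og .z) = 0)) := by
    constructor
    · intro ε hε
      exact hε.2 .z (by simp only [grm]; omega)
    · intro ε' hε'
      exact hε'.2 .z (by simp only [grm']; omega)
  refine ⟨⟨hεz1, hεz2⟩, ?_, ?_⟩
  · exact ⟨Equiv.setCongr
      (augset_eq m hm dif dif' hL hL' hb hy hx ha hz hb' hy' hx' ha' hz'),
      fun ε g => rfl⟩
  · intro ε ε' hε hε' hεε' σ σ' hσ hσ' D D' hD hD'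
    have hεx : ε (og .x) = 0 := hε.2 .x (by simp only [grm]; omega)
    have hεz : ε (og .z) = 0 := hεz1 ε hε
    have difc : ∀ c : ZMod 2,
        dif (algebraMap (ZMod 2) (MonoidAlgebra (ZMod 2) (FreeMonoid Gen)) c) = 0 := by
      intro c
      rw [Algebra.algebraMap_eq_smul_one, map_smul, dif_one dif hL, smul_zero]
    have difc' : ∀ c : ZMod 2,
        dif' (algebraMap (ZMod 2) (MonoidAlgebra (ZMod 2) (FreeMonoid Gen)) c) = 0 := by
      intro c
      rw [Algebra.algebraMap_eq_smul_one, map_smul, dif_one dif' hL', smul_zero]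
    have hDb : D (Finsupp.single Gen.b 1) = 0 := by
      have h0 : σ (dif (σ (og Gen.b))) = 0 := by
        rw [hσ, map_add, hb, difc, zero_add, map_zero]
      ext g'
      rw [hD Gen.b g', h0]
      simp
    have hD'b : D' (Finsupp.single Gen.b 1) = 0 := by
      have h0 : σ' (dif' (σ' (og Gen.b))) = 0 := by
        rw [hσ', map_add, hb', difc', zero_add, map_zero]
      ext g'
      rw [hD' Gen.b g', h0]
      simp
    have hD'z : D' (Finsupp.single Gen.z 1) = 0 := by
      have h0 : σ' (dif' (σ' (og Gen.z))) = 0 := by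
        rw [hσ', map_add, hz', difc', zero_add, map_zero]
      ext g'
      rw [hD' Gen.z g', h0]
      simp
    exact part3 m hm D D' hDb hD'b hD'z
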